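/- Separation lemma: Given d+2 points in ℝ^d in general position (every d+1 of them are affinely independent), there exist d of the points spanning an affine hyperplane that strictly separates the two remaining points. -/
import Mathlib


theorem separation_lemma (d : ℕ) (hd : 1 ≤ d) (p : Fin (d + 2) → (Fin d → ℝ))
    (hgen : ∀ s : Finset (Fin (d + 2)), s.card = d + 1 →
      AffineIndependent ℝ (fun i : s => p i)) :
    ∃ (S : Finset (Fin (d + 2))) (i j : Fin (d + 2)),
      S.card = d ∧ i ∉ S ∧ j ∉ S ∧ i ≠ j ∧
      ∃ f : (Fin d → ℝ) →ᵃ[ℝ] ℝ, (∀ k ∈ S, f (p k) = 0) ∧ f (p i) < 0 ∧ 0 < f (p j) := by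
  classical
  -- d+2 points in ℝ^d are not affinely independent
  have hb : Module.finrank ℝ (vectorSpan ℝ (Set.range p)) ≤ d :=
    le_trans (Submodule.finrank_le _) (by simp)
  have hnotai : ¬ AffineIndependent ℝ p :=
    (finrank_vectorSpan_le_iff_not_affineIndependent ℝ p (by simp)).mp hb
  rw [affineIndependent_iff] at hnotai
  push_neg at hnotai
  obtain ⟨s, w, hw0, hwc, e, he, hwe⟩ := hnotai
  set W : Fin (d + 2) → ℝ := Set.indicator ↑s w with hW
  have hWsum : ∑ k, W k = 0 := by
    rw [← Finset.sum_indicator_subset w (Finset.subset_univ s)] at hw0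
    exact hw0
  have hWc : ∑ k, W k • p k = 0 := by
    rw [← hwc]
    symm
    rw [show (∑ k ∈ s, w k • p k) = ∑ k ∈ s, W k • p k from
      Finset.sum_congr rfl fun k hk => by
        rw [hW, Set.indicator_of_mem (by simpa using hk)]]
    apply Finset.sum_subset (Finset.subset_univ s)
    intro x _ hx
    rw [hW, Set.indicator_of_notMem (by simpa using hx), zero_smul]
  have hWe : W e ≠ 0 := by
    rw [hW, Set.indicator_of_mem (by simpa using he)]
    exact hwe
  -- all weights are nonzero
  have hWne : ∀ k, W k ≠ 0 := by
    intro k0 hk0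
    have hall : ∀ k, W k = 0 := by
      intro k
      rcases eq_or_ne k k0 with rfl | hk
      · exact hk0
      · have ht : (Finset.univ.erase k0).card = d + 1 := by
          rw [Finset.card_erase_of_mem (Finset.mem_univ _), Finset.card_univ, Fintype.card_fin]
          omega
        have hai := hgen _ ht
        rw [affineIndependent_iff] at hai
        have hsum : ∑ x ∈ (Finset.univ : Finset ↥(Finset.univ.erase k0)), W ↑x = 0 := by
          rw [Finset.univ_eq_attach, Finset.sum_attach]
          have h1 := Finset.sum_erase_add Finset.univ W (Finset.mem_univ k0)
          rw [hWsum, hk0] at h1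
          linarith
        have hcomb : ∑ x ∈ (Finset.univ : Finset ↥(Finset.univ.erase k0)),
            W ↑x • p ↑x = 0 := by
          rw [Finset.univ_eq_attach, Finset.sum_attach (Finset.univ.erase k0)
            (fun k => W k • p k)]
          have h1 := Finset.sum_erase_add Finset.univ (fun k => W k • p k)
            (Finset.mem_univ k0)
          simp only [hk0, zero_smul, add_zero] at h1
          rw [h1, hWc]
        exact hai Finset.univ (fun x => W ↑x) hsum hcomb
          ⟨k, Finset.mem_erase.mpr ⟨hk, Finset.mem_univ k⟩⟩ (Finset.mem_univ _)
    exact hWe (hall e)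
  -- find two indices with same-sign weights
  obtain ⟨i, j, hij, hpos⟩ : ∃ i j : Fin (d + 2), i ≠ j ∧ 0 < W i * W j := by
    set a : Fin (d + 2) := ⟨0, by omega⟩
    set b : Fin (d + 2) := ⟨1, by omega⟩
    set c : Fin (d + 2) := ⟨2, by omega⟩
    have hab : a ≠ b := by simp [a, b, Fin.ext_iff]
    have hac : a ≠ c := by simp [a, c, Fin.ext_iff]
    have hbc : b ≠ c := by simp [b, c, Fin.ext_iff]
    rcases (mul_ne_zero (hWne a) (hWne b)).lt_or_gt with h1 | h1
    · rcases (mul_ne_zero (hWne a) (hWne c)).lt_or_gt with h2 | h2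
      · exact ⟨b, c, hbc, by nlinarith [mul_self_pos.mpr (hWne a)]⟩
      · exact ⟨a, c, hac, h2⟩
    · exact ⟨a, b, hab, h1⟩
  -- the separating set
  set S : Finset (Fin (d + 2)) := (Finset.univ.erase i).erase j with hS
  have hiS : i ∉ S := by simp [hS]
  have hjS : j ∉ S := by simp [hS]
  have hScard : S.card = d := by
    rw [hS, Finset.card_erase_of_mem
        (Finset.mem_erase.mpr ⟨hij.symm, Finset.mem_univ _⟩),
      Finset.card_erase_of_mem (Finset.mem_univ _),
      Finset.card_univ, Fintype.card_fin]
    omega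
  -- S together with i is affinely independent (it's univ.erase j)
  have htcard : (Finset.univ.erase j).card = d + 1 := by
    rw [Finset.card_erase_of_mem (Finset.mem_univ _), Finset.card_univ, Fintype.card_fin]
    omega
  have hSi := hgen (Finset.univ.erase j) htcard
  have hSsub : S ⊆ Finset.univ.erase j := by
    intro x hx
    simp only [hS, Finset.mem_erase] at hx ⊢
    exact ⟨hx.1, Finset.mem_univ x⟩
  have himem : i ∈ Finset.univ.erase j := Finset.mem_erase.mpr ⟨hij, Finset.mem_univ _⟩
  -- p i is not in the affine span of the points of S
  have himg : (fun x : ↥(Finset.univ.erase j) => p ↑x) '' {x | (x : Fin (d + 2)) ∈ S}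
      = p '' ↑S := by
    ext y
    constructor
    · rintro ⟨⟨k, hk⟩, hkS, rfl⟩
      exact ⟨k, hkS, rfl⟩
    · rintro ⟨k, hkS, rfl⟩
      exact ⟨⟨k, hSsub hkS⟩, hkS, rfl⟩
  have hinot : p i ∉ affineSpan ℝ (p '' ↑S) := by
    have h := (hSi.mem_affineSpan_iff ⟨i, himem⟩ {x | (x : Fin (d + 2)) ∈ S})
    rw [himg] at h
    intro hmem
    exact hiS (h.mp hmem)
  -- pick a base point in S
  have hSne : S.Nonempty := Finset.card_pos.mp (by omega)
  obtain ⟨k0, hk0S⟩ := hSne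
  have hck0 : p k0 ∈ affineSpan ℝ (p '' ↑S) :=
    mem_affineSpan ℝ ⟨k0, hk0S, rfl⟩
  -- p i - p k0 is not in the vector span
  have hvnot : p i - p k0 ∉ vectorSpan ℝ (p '' ↑S) := by
    intro hv
    apply hinot
    have hv' : p i -ᵥ p k0 ∈ (affineSpan ℝ (p '' ↑S)).direction := by
      rw [direction_affineSpan]
      exact hv
    exact (AffineSubspace.vsub_right_mem_direction_iff_mem hck0 (p i)).mp hv'
  -- get the dual functional
  obtain ⟨g, hg0, hgker⟩ :=
    (vectorSpan ℝ (p '' ↑S)).exists_dual_map_eq_bot_of_notMem hvnot inferInstance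
  have hgV : ∀ v ∈ vectorSpan ℝ (p '' ↑S), g v = 0 := by
    intro v hv
    have : g v ∈ (vectorSpan ℝ (p '' ↑S)).map g := Submodule.mem_map_of_mem hv
    rw [hgker] at this
    simpa using this
  -- the affine functional
  set f : (Fin d → ℝ) →ᵃ[ℝ] ℝ :=
    { toFun := fun x => g (x - p k0)
      linear := g
      map_vadd' := by
        intro q v
        simp [vadd_eq_add, add_sub_assoc, map_add] } with hfdef
  have hfS : ∀ k ∈ S, f (p k) = 0 := by
    intro k hk
    show g (p k - p k0) = 0
    exact hgV _ (vsub_mem_vectorSpan ℝ ⟨k, hk, rfl⟩ ⟨k0, hk0S, rfl⟩)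
  have hfi : f (p i) ≠ 0 := hg0
  -- key identity: sum of W k * f (p k) vanishes
  have hsum0 : ∑ k, W k * f (p k) = 0 := by
    have hpt : ∀ k, W k * f (p k) = W k * g (p k) - W k * g (p k0) := by
      intro k
      show W k * g (p k - p k0) = _
      rw [map_sub]
      ring
    have h2 : ∑ k, W k * g (p k) = 0 := by
      have : ∑ k, W k * g (p k) = g (∑ k, W k • p k) := by
        rw [map_sum]
        exact Finset.sum_congr rfl fun k _ => by rw [map_smul, smul_eq_mul]
      rw [this, hWc, map_zero]
    calc ∑ k, W k * f (p k) = ∑ k, (W k * g (p k) - W k * g (p k0)) :=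
          Finset.sum_congr rfl fun k _ => hpt k
      _ = (∑ k, W k * g (p k)) - (∑ k, W k) * g (p k0) := by
          rw [Finset.sum_sub_distrib, Finset.sum_mul]
      _ = 0 := by rw [h2, hWsum]; ring
  -- split the sum
  have huniv : (Finset.univ : Finset (Fin (d + 2))) = insert i (insert j S) := by
    ext x
    simp only [Finset.mem_univ, Finset.mem_insert, hS, Finset.mem_erase, true_iff, and_true,
      true_and]
    tauto
  have hkey : W i * f (p i) + W j * f (p j) = 0 := by
    have h1 : ∑ k ∈ insert i (insert j S), W k * f (p k)
        = W i * f (p i) + (W j * f (p j) + ∑ k ∈ S, W k * f (p k)) := by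
      rw [Finset.sum_insert (by simp [Finset.mem_insert, hij, hiS]),
        Finset.sum_insert hjS]
    have h2 : ∑ k ∈ S, W k * f (p k) = 0 :=
      Finset.sum_eq_zero fun k hk => by rw [hfS k hk, mul_zero]
    rw [← huniv, hsum0] at h1
    rw [h2] at h1
    linarith
  have hfj : f (p j) ≠ 0 := by
    intro h
    rw [h, mul_zero, add_zero] at hkey
    exact hfi ((mul_eq_zero.mp hkey).resolve_left (hWne i))
  -- conclude, by sign of f (p i)
  rcases hfi.lt_or_gt with hlt | hgt
  · refine ⟨S, i, j, hScard, hiS, hjS, hij, f, hfS, hlt, ?_⟩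
    rcases hfj.lt_or_gt with h | h
    · exfalso
      have h2 : W i * (W i * f (p i) + W j * f (p j)) = 0 := by rw [hkey]; ring
      nlinarith [h2, mul_neg_of_pos_of_neg (mul_self_pos.mpr (hWne i)) hlt,
        mul_neg_of_pos_of_neg hpos h]
    · exact h
  · refine ⟨S, j, i, hScard, hjS, hiS, hij.symm, f, hfS, ?_, hgt⟩
    rcases hfj.lt_or_gt with h | h
    · exact h
    · exfalso
      have h2 : W i * (W i * f (p i) + W j * f (p j)) = 0 := by rw [hkey]; ring
      nlinarith [h2, mul_pos (mul_self_pos.mpr (hWne i)) hgt, mul_pos hpos h]
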